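/- Let L ≥ 2 and M ≥ 2 be integers and let a₀, a₁, …, a_M be integers such that |a_{k+1} − a_k| = 1 for every 0 ≤ k ≤ M − 1, a₀ = L, and a_M = 2L. Then there exist indices 0 ≤ m₁ < m₂ < … < m_{L−1} ≤ M − 2 such that for every j ∈ {1,…,L−1}: a_{m_j} = L + j − 1, a_{m_j + 1} = L + j, and a_{m_j + 2} = L + j + 1. -/
import Mathlib

private lemma ivt_path (M : ℕ) (a : ℕ → ℤ)
    (hstep : ∀ k, k < M → |a (k + 1) - a k| = 1) (c : ℤ) :
    ∀ n s, s + n ≤ M → a s ≤ c → c ≤ a (s + n) →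
      ∃ k, s ≤ k ∧ k ≤ s + n ∧ a k = c := by
  intro n
  induction n with
  | zero => exact fun s _ h1 h2 => ⟨s, le_refl _, le_refl _, le_antisymm h1 h2⟩
  | succ n ih =>
    intro s hsn h1 h2
    rcases eq_or_lt_of_le h1 with he | hlt
    · exact ⟨s, le_refl _, Nat.le_add_right _ _, he⟩
    · have hsM : s < M := by omega
      have hs := hstep s hsM
      have h3 : a (s + 1) ≤ c := by
        rcases (abs_eq (by norm_num : (0:ℤ) ≤ 1)).mp hs with h | h <;> omega
      have hsn' : s + 1 + n ≤ M := by omega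
      have h4 : c ≤ a (s + 1 + n) := by
        have he : s + 1 + n = s + (n + 1) := by omega
        rw [he]; exact h2
      obtain ⟨k, hk1, hk2, hk3⟩ := ih (s + 1) hsn' h3 h4
      exact ⟨k, by omega, by omega, hk3⟩

/-- A nearest-neighbor (±1) integer path from level `L` to level `2L` must
perform at least `L − 1` double jumps upward, one from level `L + j − 1`
through `L + j` to `L + j + 1` for each `j = 1,…,L−1` (indexed here by
`j' = j − 1 ∈ Fin (L−1)`), occurring at strictly increasing steps
`m₁ < … < m_{L−1} ≤ M − 2`. -/
theorem double_jumps_upward_exist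
    (L M : ℕ) (hL : 2 ≤ L) (hM : 2 ≤ M) (a : ℕ → ℤ)
    (hstep : ∀ k, k < M → |a (k + 1) - a k| = 1)
    (h0 : a 0 = (L : ℤ)) (hMval : a M = 2 * (L : ℤ)) :
    ∃ m : Fin (L - 1) → ℕ, StrictMono m ∧ (∀ j, m j + 2 ≤ M) ∧
      ∀ j : Fin (L - 1),
        a (m j) = (L : ℤ) + (j : ℕ) ∧
        a (m j + 1) = (L : ℤ) + (j : ℕ) + 1 ∧
        a (m j + 2) = (L : ℤ) + (j : ℕ) + 2 := by
  classical
  set m : Fin (L - 1) → ℕ :=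
    fun j => Nat.findGreatest (fun k => a k = (L : ℤ) + (j : ℕ)) M with hmdef
  have key : ∀ j : Fin (L - 1),
      a (m j) = (L : ℤ) + (j : ℕ) ∧ m j + 2 ≤ M ∧
      a (m j + 1) = (L : ℤ) + (j : ℕ) + 1 ∧
      a (m j + 2) = (L : ℤ) + (j : ℕ) + 2 := by
    intro j
    have hj : (j : ℕ) < L - 1 := j.isLt
    have hjL : ((j : ℕ) : ℤ) + 2 ≤ (L : ℤ) := by
      have : (j : ℕ) + 2 ≤ L := by omega
      exact_mod_cast this
    -- existence of a visit to level L + j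
    obtain ⟨k, hk0, hkM, hka⟩ := ivt_path M a hstep ((L : ℤ) + (j : ℕ)) M 0
      (by omega) (by rw [h0]; linarith) (by simp only [Nat.zero_add]; rw [hMval]; linarith)
    have hspec : a (m j) = (L : ℤ) + (j : ℕ) :=
      Nat.findGreatest_spec (P := fun k => a k = (L : ℤ) + (j : ℕ)) (n := M) (m := k) (by omega) hka
    have hle : m j ≤ M := Nat.findGreatest_le (P := fun k => a k = (L : ℤ) + (j : ℕ)) M
    have hgreat : ∀ t, m j < t → t ≤ M → a t ≠ (L : ℤ) + (j : ℕ) :=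
      fun t h1 h2 => Nat.findGreatest_is_greatest (P := fun k => a k = (L : ℤ) + (j : ℕ)) h1 h2
    have hmjM : m j < M := by
      rcases eq_or_lt_of_le hle with he | h
      · exfalso; rw [he, hMval] at hspec; linarith
      · exact h
    have hs1 := hstep (m j) hmjM
    have hup : a (m j + 1) = (L : ℤ) + (j : ℕ) + 1 := by
      rcases (abs_eq (by norm_num : (0:ℤ) ≤ 1)).mp hs1 with h | h
      · linarith [hspec]
      · exfalso
        have hdown : a (m j + 1) = (L : ℤ) + (j : ℕ) - 1 := by linarith [hspec]
        obtain ⟨t, ht1, ht2, ht3⟩ := ivt_path M a hstep ((L : ℤ) + (j : ℕ))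
          (M - (m j + 1)) (m j + 1) (by omega) (by rw [hdown]; linarith)
          (by rw [show m j + 1 + (M - (m j + 1)) = M by omega, hMval]; linarith)
        exact hgreat t (by omega) (by omega) ht3
    have hm1M : m j + 1 < M := by
      rcases eq_or_lt_of_le (show m j + 1 ≤ M by omega) with he | h
      · exfalso; rw [he, hMval] at hup; linarith
      · exact h
    have hs2 := hstep (m j + 1) hm1M
    have hup2 : a (m j + 2) = (L : ℤ) + (j : ℕ) + 2 := by
      rcases (abs_eq (by norm_num : (0:ℤ) ≤ 1)).mp hs2 with h | h
      · linarith [hup]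
      · exfalso
        exact hgreat (m j + 2) (by omega) (by omega) (by linarith [hup])
    exact ⟨hspec, by omega, hup, hup2⟩
  refine ⟨m, ?_, fun j => (key j).2.1, fun j => ⟨(key j).1, (key j).2.2.1, (key j).2.2.2⟩⟩
  intro j j' hjj
  have hjj' : (j : ℕ) < (j' : ℕ) := hjj
  have hj'L : ((j' : ℕ) : ℤ) + 2 ≤ (L : ℤ) := by
    have : (j' : ℕ) + 2 ≤ L := by have := j'.isLt; omega
    exact_mod_cast this
  have hup := (key j).2.2.1
  have hle2 : m j + 2 ≤ M := (key j).2.1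
  have hcast : ((j : ℕ) : ℤ) + 1 ≤ ((j' : ℕ) : ℤ) := by exact_mod_cast hjj'
  obtain ⟨t, ht1, ht2, ht3⟩ := ivt_path M a hstep ((L : ℤ) + (j' : ℕ))
    (M - (m j + 1)) (m j + 1) (by omega) (by rw [hup]; linarith)
    (by rw [show m j + 1 + (M - (m j + 1)) = M by omega, hMval]; linarith)
  have : t ≤ m j' := Nat.le_findGreatest (P := fun k => a k = (L : ℤ) + (j' : ℕ)) (by omega) ht3
  omega
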